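/- Let K₃(Σ) = π/(2√3) + (1/6)·[6·(Σ³+1)^{1/3} + 2·log((Σ³+1)^{1/3} − 1) − log((Σ³+1)^{2/3} + (Σ³+1)^{1/3} + 1) − 2√3·arctan((2·(Σ³+1)^{1/3} + 1)/√3)] for Σ > 0. Then for every Σ > 0, (K₃′(Σ))²·(K₃′(Σ) + Σ·K₃″(Σ)) = 1. -/

import Mathlib

/-- The Kähler potential of the Ricci-flat Kähler metric on `O_{P²}(-3)`, as a function of
the invariant `Σ = |z₁|² + |z₂|² + |z₃|²`. -/
noncomputable def K₃ (S : ℝ) : ℝ :=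
  Real.pi / (2 * Real.sqrt 3) + (1 / 6) *
    (6 * (S ^ 3 + 1) ^ ((1 : ℝ) / 3)
      + 2 * Real.log ((S ^ 3 + 1) ^ ((1 : ℝ) / 3) - 1)
      - Real.log ((S ^ 3 + 1) ^ ((2 : ℝ) / 3) + (S ^ 3 + 1) ^ ((1 : ℝ) / 3) + 1)
      - 2 * Real.sqrt 3 *
          Real.arctan ((2 * (S ^ 3 + 1) ^ ((1 : ℝ) / 3) + 1) / Real.sqrt 3))

lemma hasDerivAt_K₃ {S : ℝ} (hS : 0 < S) :
    HasDerivAt K₃ ((S ^ 3 + 1) ^ ((1 : ℝ) / 3) / S) S := by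
  have hB : (0:ℝ) < S ^ 3 + 1 := by positivity
  have hB1 : (1:ℝ) < S ^ 3 + 1 := by nlinarith [pow_pos hS 3]
  set u : ℝ := (S ^ 3 + 1) ^ ((1:ℝ)/3) with hu_def
  have hu1 : 1 < u := by
    rw [hu_def]
    exact (Real.one_lt_rpow_iff_of_pos hB).mpr (Or.inl ⟨hB1, by norm_num⟩)
  have hu0 : (0:ℝ) < u := lt_trans one_pos hu1
  have hu3 : u ^ 3 = S ^ 3 + 1 := by
    rw [hu_def, ← Real.rpow_natCast ((S ^ 3 + 1) ^ ((1:ℝ)/3)) 3, ← Real.rpow_mul hB.le]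
    norm_num
  have hu2 : (S ^ 3 + 1) ^ ((2:ℝ)/3) = u ^ 2 := by
    rw [hu_def, ← Real.rpow_natCast ((S ^ 3 + 1) ^ ((1:ℝ)/3)) 2, ← Real.rpow_mul hB.le]
    norm_num
  have hs3 : Real.sqrt 3 ^ 2 = 3 := Real.sq_sqrt (by norm_num)
  have hs0 : (0:ℝ) < Real.sqrt 3 := Real.sqrt_pos.mpr (by norm_num)
  have hpoly : HasDerivAt (fun x : ℝ => x ^ 3 + 1) (3 * S ^ 2) S := by
    simpa using (hasDerivAt_pow 3 S).add_const 1
  have hu' : HasDerivAt (fun x : ℝ => (x ^ 3 + 1) ^ ((1:ℝ)/3))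
      (S ^ 2 * u / (S ^ 3 + 1)) S := by
    have h := hpoly.rpow_const (p := (1:ℝ)/3) (Or.inl hB.ne')
    convert h using 1
    rw [show (1:ℝ)/3 - 1 = (1:ℝ)/3 - (1:ℝ) by norm_num, Real.rpow_sub hB, Real.rpow_one,
      ← hu_def]
    ring
  have h2 : HasDerivAt (fun x : ℝ => (x ^ 3 + 1) ^ ((2:ℝ)/3))
      (2 * S ^ 2 * u ^ 2 / (S ^ 3 + 1)) S := by
    have h := hpoly.rpow_const (p := (2:ℝ)/3) (Or.inl hB.ne')
    convert h using 1
    rw [show (2:ℝ)/3 - 1 = (2:ℝ)/3 - (1:ℝ) by norm_num, Real.rpow_sub hB, Real.rpow_one, hu2]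
    ring
  -- term 1 : 6 * u
  have t1 : HasDerivAt (fun x : ℝ => 6 * (x ^ 3 + 1) ^ ((1:ℝ)/3))
      (6 * (S ^ 2 * u / (S ^ 3 + 1))) S := hu'.const_mul 6
  -- term 2 : 2 * log (u - 1)
  have hne2 : u - 1 ≠ 0 := by linarith
  have t2 : HasDerivAt (fun x : ℝ => 2 * Real.log ((x ^ 3 + 1) ^ ((1:ℝ)/3) - 1))
      (2 * ((S ^ 2 * u / (S ^ 3 + 1)) / (u - 1))) S :=
    ((hu'.sub_const 1).log hne2).const_mul 2
  -- term 3 : log (u² + u + 1)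
  have hne3 : (S ^ 3 + 1) ^ ((2:ℝ)/3) + u + 1 ≠ 0 := by
    rw [hu2]; positivity
  have t3 : HasDerivAt
      (fun x : ℝ => Real.log ((x ^ 3 + 1) ^ ((2:ℝ)/3) + (x ^ 3 + 1) ^ ((1:ℝ)/3) + 1))
      ((2 * S ^ 2 * u ^ 2 / (S ^ 3 + 1) + S ^ 2 * u / (S ^ 3 + 1)) /
        ((S ^ 3 + 1) ^ ((2:ℝ)/3) + u + 1)) S :=
    ((h2.add hu').add_const 1).log hne3
  -- term 4 : 2√3 * arctan ((2u+1)/√3)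
  have t4inner : HasDerivAt (fun x : ℝ => (2 * (x ^ 3 + 1) ^ ((1:ℝ)/3) + 1) / Real.sqrt 3)
      ((2 * (S ^ 2 * u / (S ^ 3 + 1))) / Real.sqrt 3) S :=
    ((hu'.const_mul 2).add_const 1).div_const _
  have t4 : HasDerivAt
      (fun x : ℝ => 2 * Real.sqrt 3 *
        Real.arctan ((2 * (x ^ 3 + 1) ^ ((1:ℝ)/3) + 1) / Real.sqrt 3))
      (2 * Real.sqrt 3 * (1 / (1 + ((2 * u + 1) / Real.sqrt 3) ^ 2) *
        ((2 * (S ^ 2 * u / (S ^ 3 + 1))) / Real.sqrt 3))) S :=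
    (t4inner.arctan).const_mul _
  have hsum := ((((t1.add t2).sub t3).sub t4).const_mul ((1:ℝ)/6)).const_add
      (Real.pi / (2 * Real.sqrt 3))
  have hK : K₃ = fun x : ℝ => Real.pi / (2 * Real.sqrt 3) + (1/6) *
      (6 * (x ^ 3 + 1) ^ ((1:ℝ)/3)
        + 2 * Real.log ((x ^ 3 + 1) ^ ((1:ℝ)/3) - 1)
        - Real.log ((x ^ 3 + 1) ^ ((2:ℝ)/3) + (x ^ 3 + 1) ^ ((1:ℝ)/3) + 1)
        - 2 * Real.sqrt 3 *
            Real.arctan ((2 * (x ^ 3 + 1) ^ ((1:ℝ)/3) + 1) / Real.sqrt 3)) := rfl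
  rw [hK]
  refine hsum.congr_deriv ?_
  symm
  rw [hu2]
  have hden : 1 + ((2 * u + 1) / Real.sqrt 3) ^ 2 = (4 * u ^ 2 + 4 * u + 4) / 3 := by
    rw [div_pow, hs3]; ring
  rw [hden]
  have h1 : u ^ 2 + u + 1 ≠ 0 := by positivity
  have h4 : (4 * u ^ 2 + 4 * u + 4 : ℝ) ≠ 0 := by positivity
  field_simp
  linear_combination 24 * hu3

theorem hasDerivAt_K₃' {S : ℝ} (hS : 0 < S) :
    HasDerivAt (deriv K₃) ((S ^ 2 * ((S ^ 3 + 1) ^ ((1:ℝ)/3)) / (S ^ 3 + 1) * S -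
      (S ^ 3 + 1) ^ ((1:ℝ)/3)) / S ^ 2) S := by
  have hB : (0:ℝ) < S ^ 3 + 1 := by positivity
  have hu' : HasDerivAt (fun x : ℝ => (x ^ 3 + 1) ^ ((1:ℝ)/3))
      (S ^ 2 * ((S ^ 3 + 1) ^ ((1:ℝ)/3)) / (S ^ 3 + 1)) S := by
    have hpoly : HasDerivAt (fun x : ℝ => x ^ 3 + 1) (3 * S ^ 2) S := by
      simpa using (hasDerivAt_pow 3 S).add_const 1
    have h := hpoly.rpow_const (p := (1:ℝ)/3) (Or.inl hB.ne')
    convert h using 1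
    rw [show (1:ℝ)/3 - 1 = (1:ℝ)/3 - (1:ℝ) by norm_num, Real.rpow_sub hB, Real.rpow_one]
    ring
  have hg : HasDerivAt (fun x : ℝ => (x ^ 3 + 1) ^ ((1:ℝ)/3) / x)
      ((S ^ 2 * ((S ^ 3 + 1) ^ ((1:ℝ)/3)) / (S ^ 3 + 1) * S -
        (S ^ 3 + 1) ^ ((1:ℝ)/3)) / S ^ 2) S := by
    exact (hu'.div (hasDerivAt_id' S) hS.ne').congr_deriv (by simp)
  have heq : deriv K₃ =ᶠ[nhds S] fun x : ℝ => (x ^ 3 + 1) ^ ((1:ℝ)/3) / x := by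
    filter_upwards [IsOpen.mem_nhds isOpen_Ioi hS] with x hx
    exact (hasDerivAt_K₃ hx).deriv
  exact hg.congr_of_eventuallyEq heq

/-- For every `Σ > 0`, `(K₃′(Σ))²·(K₃′(Σ) + Σ·K₃″(Σ)) = 1`
(the Monge–Ampère equation expressing Ricci-flatness of the metric on `O_{P²}(-3)`). -/
theorem stmt_3 :
    ∀ S : ℝ, 0 < S →
      (deriv K₃ S) ^ 2 * (deriv K₃ S + S * deriv (deriv K₃) S) = 1 := by
  intro S hS
  have hB : (0:ℝ) < S ^ 3 + 1 := by positivity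
  have h1 : deriv K₃ S = (S ^ 3 + 1) ^ ((1:ℝ)/3) / S := (hasDerivAt_K₃ hS).deriv
  have h2 : deriv (deriv K₃) S = (S ^ 2 * ((S ^ 3 + 1) ^ ((1:ℝ)/3)) / (S ^ 3 + 1) * S -
      (S ^ 3 + 1) ^ ((1:ℝ)/3)) / S ^ 2 := (hasDerivAt_K₃' hS).deriv
  set u : ℝ := (S ^ 3 + 1) ^ ((1:ℝ)/3) with hu_def
  have hu3 : u ^ 3 = S ^ 3 + 1 := by
    rw [hu_def, ← Real.rpow_natCast ((S ^ 3 + 1) ^ ((1:ℝ)/3)) 3, ← Real.rpow_mul hB.le]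
    norm_num
  rw [h1, h2]
  field_simp
  linear_combination (S ^ 3) * hu3
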